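/- Let k ≥ 2 and let F be a strictly k-balanced k-uniform hypergraph with v vertices and h hyperedges, where h ≥ v−k+1 and Δ_{k−1}(F) ≥ 2, and let c_2 be sufficiently large in terms of v and h. Then for all sufficiently large n and every hyperedge f of K_n^k, the expected number of (⌈log n⌉, f)-clusters in H_{n,p} is at most n^{−2k}. -/

import Mathlib

open MeasureTheory Finset Filter

noncomputable section
attribute [local instance] Classical.propDecidable

/-- A `k`-uniform hypergraph: a finite vertex set (of naturals) together with a
set of hyperedges, each of which is a `k`-subset of the vertex set. -/
structure UnifHypergraph (k : ℕ) where
  verts : Finset ℕ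
  edges : Finset (Finset ℕ)
  edge_sub : ∀ e ∈ edges, e ⊆ verts
  edge_card : ∀ e ∈ edges, e.card = k

namespace UnifHypergraph

variable {k : ℕ}

/-- `F'` is a subgraph of `F`. -/
def IsSubgraph (F' F : UnifHypergraph k) : Prop :=
  F'.verts ⊆ F.verts ∧ F'.edges ⊆ F.edges

/-- The degree `d_F(U)` of a vertex set `U`: the number of hyperedges containing `U`. -/
def deg (F : UnifHypergraph k) (U : Finset ℕ) : ℕ :=
  (F.edges.filter fun e => U ⊆ e).card

/-- The maximum `i`-degree `Δ_i(F)`. -/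
def maxDeg (F : UnifHypergraph k) (i : ℕ) : ℕ :=
  (F.verts.powersetCard i).sup F.deg

/-- `F` is strictly `k`-balanced. -/
def StrictlyBalanced (F : UnifHypergraph k) : Prop :=
  k + 1 ≤ F.verts.card ∧
  ∀ F' : UnifHypergraph k, F'.IsSubgraph F → F' ≠ F → k + 1 ≤ F'.verts.card →
    ((F'.edges.card : ℝ) - 1) / ((F'.verts.card : ℝ) - (k : ℝ)) <
      ((F.edges.card : ℝ) - 1) / ((F.verts.card : ℝ) - (k : ℝ))

/-- `h_i`: the maximum number of edges of a proper subgraph of `F` on `i` vertices. -/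
def hsub (F : UnifHypergraph k) (i : ℕ) : ℕ :=
  sSup {m | ∃ F' : UnifHypergraph k, F'.IsSubgraph F ∧ F' ≠ F ∧
    F'.verts.card = i ∧ F'.edges.card = m}

/-- `δ_i := i - k - (h_i - 1)(v-k)/(h-1)`. -/
def deltaI (F : UnifHypergraph k) (i : ℕ) : ℝ :=
  (i : ℝ) - (k : ℝ) -
    ((F.hsub i : ℝ) - 1) * ((F.verts.card : ℝ) - (k : ℝ)) / ((F.edges.card : ℝ) - 1)

/-- `δ := min_{k+1 ≤ i ≤ v} δ_i`. -/
def deltaMin (F : UnifHypergraph k) : ℝ :=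
  sInf {x | ∃ i : ℕ, k + 1 ≤ i ∧ i ≤ F.verts.card ∧ x = F.deltaI i}

end UnifHypergraph

variable {k : ℕ} {V : Type*} [DecidableEq V]

/-- The edge set of the image of `F` under a vertex map `φ`. -/
def copyEdges (F : UnifHypergraph k) (φ : ℕ → V) : Finset (Finset V) :=
  F.edges.image fun e => e.image φ

/-- `A` is (the edge set of) a copy of `F` inside the edge set `E`. -/
def IsCopy (F : UnifHypergraph k) (E A : Finset (Finset V)) : Prop :=
  ∃ φ : ℕ → V, Set.InjOn φ F.verts ∧ A = copyEdges F φ ∧ A ⊆ E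

/-- `E` contains a copy of `F`. -/
def HasCopy (F : UnifHypergraph k) (E : Finset (Finset V)) : Prop :=
  ∃ A, IsCopy F E A

/-- The greedy `F`-free process run on a list of candidate hyperedges: each edge
is added unless it would create a copy of `F`. -/
def greedy (F : UnifHypergraph k) (L : List (Finset V)) : Finset (Finset V) :=
  L.foldl (fun G e => if HasCopy F (insert e G) then G else insert e G) ∅

/-- An `(r,f)`-cluster (given by the edge sets of its `r` copies of `F`). -/
def IsCluster (F : UnifHypergraph k) (E : Finset (Finset V)) (f : Finset V) (r : ℕ)
    (c : Fin r → Finset (Finset V)) : Prop :=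
  (∀ i, IsCopy F E (c i) ∧ f ∈ c i) ∧
  (∀ i : Fin r, 0 < (i : ℕ) → ∃ g ∈ c i, ∀ j, j < i → g ∉ c j)

/-- `E` contains an `(r,f)`-cluster. -/
def HasCluster (F : UnifHypergraph k) (E : Finset (Finset V)) (f : Finset V) (r : ℕ) : Prop :=
  ∃ c : Fin r → Finset (Finset V), IsCluster F E f r c

/-- The number of `(r,f)`-clusters in `E`. -/
def clusterCount (F : UnifHypergraph k) (E : Finset (Finset V)) (f : Finset V) (r : ℕ) : ℕ :=
  Set.ncard {c : Fin r → Finset (Finset V) | IsCluster F E f r c}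

/-- The hyperedges of the complete `k`-uniform hypergraph on `[n] = Fin n`. -/
def kSets (n k : ℕ) : Finset (Finset (Fin n)) :=
  Finset.univ.powersetCard k

/-- The probability space of independent uniform-`[0,1]` birthtimes on the
(potential) hyperedges of `K_n^k`. -/
def birthμ (n : ℕ) : Measure (Finset (Fin n) → ℝ) :=
  Measure.pi fun _ => volume.restrict (Set.Icc (0 : ℝ) 1)

/-- The binomial random hypergraph `H_{n,p}`: the hyperedges with birthtime at most `p`. -/
def Hnp (n k : ℕ) (p : ℝ) (ω : Finset (Fin n) → ℝ) : Finset (Finset (Fin n)) :=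
  (kSets n k).filter fun e => ω e ≤ p

/-- `H_{n,p}^-`: delete from `H_{n,p}` every hyperedge lying in a copy of `F`. -/
def HnpMinus (F : UnifHypergraph k) (n : ℕ) (p : ℝ) (ω : Finset (Fin n) → ℝ) :
    Finset (Finset (Fin n)) :=
  (Hnp n k p ω).filter fun e => ¬ ∃ A, IsCopy F (Hnp n k p ω) A ∧ e ∈ A

/-- The greedy `F`-free process `R_{n,p}`: process the hyperedges with birthtime
at most `p` in increasing order of birthtime, adding each unless it creates a copy of `F`. -/
def Rproc (F : UnifHypergraph k) (n : ℕ) (β : Finset (Fin n) → ℝ) (p : ℝ) :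
    Finset (Finset (Fin n)) :=
  greedy F ((((kSets n k).filter fun e => β e ≤ p).toList).mergeSort fun a b => β a ≤ β b)

/-- The maximum `i`-degree of a hypergraph on vertex set `Fin n` given by its edge set. -/
def hostMaxDeg {n : ℕ} (E : Finset (Finset (Fin n))) (i : ℕ) : ℕ :=
  ((Finset.univ : Finset (Fin n)).powersetCard i).sup fun U =>
    (E.filter fun e => U ⊆ e).card

/-- The edge probability `p := 1/(c₂ (n^{v-k} log n)^{1/(h-1)})`. -/
def pval (c₂ : ℝ) (k v h n : ℕ) : ℝ :=
  1 / (c₂ * (((n : ℝ) ^ ((v : ℝ) - (k : ℝ)) * Real.log n) ^ ((1 : ℝ) / ((h : ℝ) - 1))))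

/-- The degree bound `t := c₁ n p (log n)^{3/(d-1)}`. -/
def tval (c₁ c₂ : ℝ) (k v h d n : ℕ) : ℝ :=
  c₁ * (n : ℝ) * pval c₂ k v h n * Real.log n ^ ((3 : ℝ) / ((d : ℝ) - 1))

/-- The subgraph `F̂` of `F`: all vertices of `F`, and those hyperedges meeting `U`
in at most `k-2` vertices. -/
def hatF (F : UnifHypergraph k) (U : Finset ℕ) : UnifHypergraph k where
  verts := F.verts
  edges := F.edges.filter fun e => (e ∩ U).card ≤ k - 2
  edge_sub := fun e he => F.edge_sub e (Finset.mem_filter.mp he).1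
  edge_card := fun e he => F.edge_card e (Finset.mem_filter.mp he).1

/-- The neighbourhood `N_F(U)` of `U` in `F`. -/
def nbhd (F : UnifHypergraph k) (U : Finset ℕ) : Finset ℕ :=
  F.verts.filter fun x => insert x U ∈ F.edges

/-- `S(H,T,V')`: the set of (edge sets of) copies of `F̂` in the edge set `E` mapping
`u i ↦ v' i`, `N_F(U)` into `T`, and `V(F) \ N_F(U)` outside `T`. -/
def Scopies (F : UnifHypergraph k) (U : Finset ℕ) (u : Fin (k - 1) → ℕ) {n : ℕ}
    (T : Finset (Fin n)) (v' : Fin (k - 1) → Fin n) (E : Finset (Finset (Fin n))) :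
    Set (Finset (Finset (Fin n))) :=
  {A | ∃ φ : ℕ → Fin n, Set.InjOn φ F.verts ∧
    A = copyEdges (hatF F U) φ ∧ A ⊆ E ∧
    (∀ i, φ (u i) = v' i) ∧
    (∀ x ∈ nbhd F U, φ x ∈ T) ∧
    (∀ x ∈ F.verts, x ∉ nbhd F U → φ x ∉ T)}



/-! ### Auxiliary development -/

section Aux

open Finset

variable {k : ℕ}

/-- The edge set of `A` as an abstract copy (no containment in a host). -/
def IsCopyShape (F : UnifHypergraph k) {n : ℕ} (A : Finset (Finset (Fin n))) : Prop :=
  ∃ φ : ℕ → Fin n, Set.InjOn φ F.verts ∧ A = copyEdges F φ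

/-- A valid next copy extending a current edge set `D`. -/
def ExtOK (F : UnifHypergraph k) {n : ℕ} (f : Finset (Fin n)) (D A : Finset (Finset (Fin n))) :
    Prop :=
  IsCopyShape F A ∧ f ∈ A ∧ ¬ A ⊆ D

/-- The deterministic part of the cluster condition. -/
def ValidSeq (F : UnifHypergraph k) {n : ℕ} (f : Finset (Fin n)) (r : ℕ)
    (c : Fin r → Finset (Finset (Fin n))) : Prop :=
  (∀ i, IsCopyShape F (c i) ∧ f ∈ c i) ∧
  (∀ i : Fin r, 0 < (i : ℕ) → ∃ g ∈ c i, ∀ j, j < i → g ∉ c j)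

lemma copyEdges_congr {F : UnifHypergraph k} {n : ℕ} {φ φ' : ℕ → Fin n}
    (h : ∀ x ∈ F.verts, φ x = φ' x) : copyEdges F φ = copyEdges F φ' := by
  unfold copyEdges
  apply Finset.image_congr
  intro e he
  exact Finset.image_congr fun x hx => h x (F.edge_sub e he hx)

lemma card_of_mem_copyEdges {F : UnifHypergraph k} {n : ℕ} {φ : ℕ → Fin n}
    (hinj : Set.InjOn φ F.verts) {g : Finset (Fin n)} (hg : g ∈ copyEdges F φ) :
    g.card = k := by
  rcases Finset.mem_image.mp hg with ⟨e, he, rfl⟩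
  rw [Finset.card_image_of_injOn (hinj.mono (by exact_mod_cast F.edge_sub e he))]
  exact F.edge_card e he

lemma copyEdges_subset_kSets {F : UnifHypergraph k} {n : ℕ} {φ : ℕ → Fin n}
    (hinj : Set.InjOn φ F.verts) : copyEdges F φ ⊆ kSets n k := by
  intro g hg
  simp only [kSets, Finset.mem_powersetCard]
  exact ⟨Finset.subset_univ _, card_of_mem_copyEdges hinj hg⟩

lemma card_copyEdges {F : UnifHypergraph k} {n : ℕ} {φ : ℕ → Fin n}
    (hinj : Set.InjOn φ F.verts) : (copyEdges F φ).card = F.edges.card := by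
  unfold copyEdges
  apply Finset.card_image_of_injOn
  intro e₁ h₁ e₂ h₂ hee
  have key : ∀ e₁ e₂ : Finset ℕ, e₁ ∈ F.edges → e₂ ∈ F.edges →
      e₁.image φ = e₂.image φ → e₁ ⊆ e₂ := by
    intro e₁ e₂ h₁ h₂ hee x hx
    have : φ x ∈ e₂.image φ := hee ▸ Finset.mem_image_of_mem φ hx
    rcases Finset.mem_image.mp this with ⟨y, hy, hxy⟩
    have := hinj (F.edge_sub e₂ h₂ hy) (F.edge_sub e₁ h₁ hx) hxy
    rwa [this] at hy
  exact Finset.Subset.antisymm (key e₁ e₂ h₁ h₂ hee) (key e₂ e₁ h₂ h₁ hee.symm)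

/-- total union of edges of a sequence of copies -/
def Uc {n : ℕ} {r : ℕ} (c : Fin r → Finset (Finset (Fin n))) : Finset (Finset (Fin n)) :=
  Finset.univ.sup c

lemma mem_Uc {n r : ℕ} {c : Fin r → Finset (Finset (Fin n))} {g : Finset (Fin n)} :
    g ∈ Uc c ↔ ∃ i, g ∈ c i := by
  simp [Uc, Finset.mem_sup]

lemma Uc_subset_iff {n r : ℕ} {c : Fin r → Finset (Finset (Fin n))}
    {E : Finset (Finset (Fin n))} : Uc c ⊆ E ↔ ∀ i, c i ⊆ E := by
  constructor
  · intro h i g hg; exact h (mem_Uc.mpr ⟨i, hg⟩)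
  · intro h g hg; rcases mem_Uc.mp hg with ⟨i, hi⟩; exact h i hi

lemma Uc_subset_kSets {F : UnifHypergraph k} {n r : ℕ} {f : Finset (Fin n)}
    {c : Fin r → Finset (Finset (Fin n))} (hc : ValidSeq F f r c) :
    Uc c ⊆ kSets n k := by
  rw [Uc_subset_iff]
  intro i
  rcases (hc.1 i).1 with ⟨φ, hinj, hA⟩
  rw [hA]
  exact copyEdges_subset_kSets hinj

lemma isCluster_iff {F : UnifHypergraph k} {n r : ℕ} {f : Finset (Fin n)}
    {E : Finset (Finset (Fin n))} {c : Fin r → Finset (Finset (Fin n))} :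
    IsCluster F E f r c ↔ ValidSeq F f r c ∧ Uc c ⊆ E := by
  constructor
  · rintro ⟨h1, h2⟩
    refine ⟨⟨fun i => ⟨?_, (h1 i).2⟩, h2⟩, ?_⟩
    · rcases (h1 i).1 with ⟨φ, hinj, hA, _⟩; exact ⟨φ, hinj, hA⟩
    · rw [Uc_subset_iff]; intro i
      rcases (h1 i).1 with ⟨φ, hinj, hA, hsub⟩; exact hsub
  · rintro ⟨⟨h1, h2⟩, h3⟩
    refine ⟨fun i => ⟨?_, (h1 i).2⟩, h2⟩
    rcases (h1 i).1 with ⟨φ, hinj, hA⟩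
    exact ⟨φ, hinj, hA, (Uc_subset_iff.mp h3) i⟩

end Aux


/-! ### Probability computations -/

section Prob

open Finset MeasureTheory

instance restrictIcc_prob : IsProbabilityMeasure (volume.restrict (Set.Icc (0:ℝ) 1)) := by
  constructor
  rw [Measure.restrict_apply MeasurableSet.univ]
  simp

instance birthμ_prob (n : ℕ) : IsProbabilityMeasure (birthμ n) := by
  unfold birthμ
  infer_instance

lemma measure_subset_Hnp {n k' : ℕ} {p : ℝ} (hp0 : 0 ≤ p) (hp1 : p ≤ 1)
    {U : Finset (Finset (Fin n))} (hU : U ⊆ kSets n k') :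
    birthμ n {ω | U ⊆ Hnp n k' p ω} = ENNReal.ofReal p ^ U.card := by
  have hset : {ω : Finset (Fin n) → ℝ | U ⊆ Hnp n k' p ω} =
      Set.pi Set.univ (fun e => if e ∈ U then Set.Iic p else Set.univ) := by
    ext ω
    simp only [Set.mem_setOf_eq, Set.mem_pi, Set.mem_univ, forall_true_left]
    constructor
    · intro h e
      by_cases he : e ∈ U
      · simp only [he, if_true, Set.mem_Iic]
        have := h he
        simp only [Hnp, Finset.mem_filter] at this
        exact this.2
      · simp [he]
    · intro h g hg
      have := h g
      simp only [hg, if_true, Set.mem_Iic] at this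
      simp only [Hnp, Finset.mem_filter]
      exact ⟨hU hg, this⟩
  rw [hset]
  unfold birthμ
  rw [Measure.pi_pi]
  have : ∀ e : Finset (Fin n),
      (volume.restrict (Set.Icc (0:ℝ) 1)) (if e ∈ U then Set.Iic p else Set.univ) =
      if e ∈ U then ENNReal.ofReal p else 1 := by
    intro e
    by_cases he : e ∈ U
    · simp only [he, if_true]
      rw [Measure.restrict_apply measurableSet_Iic]
      have : Set.Iic p ∩ Set.Icc (0:ℝ) 1 = Set.Icc 0 p := by
        ext x
        simp only [Set.mem_inter_iff, Set.mem_Iic, Set.mem_Icc]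
        constructor
        · rintro ⟨h1, h2, h3⟩; exact ⟨h2, h1⟩
        · rintro ⟨h1, h2⟩; exact ⟨h2, h1, h2.trans hp1⟩
      rw [this, Real.volume_Icc, sub_zero]
    · simp only [he, if_false]
      exact measure_univ
  simp only [this]
  rw [Finset.prod_ite_mem, Finset.univ_inter, Finset.prod_const]

lemma measurable_subset_event {n k' : ℕ} {p : ℝ} (U : Finset (Finset (Fin n))) :
    MeasurableSet {ω : Finset (Fin n) → ℝ | U ⊆ Hnp n k' p ω} := by
  have : {ω : Finset (Fin n) → ℝ | U ⊆ Hnp n k' p ω} =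
      ⋂ g ∈ (U : Set (Finset (Fin n))), {ω : Finset (Fin n) → ℝ | g ∈ kSets n k' ∧ ω g ≤ p} := by
    ext ω
    simp only [Set.mem_setOf_eq, Set.mem_iInter, Finset.mem_coe]
    constructor
    · intro h g hg
      have := h hg
      simpa [Hnp, Finset.mem_filter] using this
    · intro h g hg
      simpa [Hnp, Finset.mem_filter] using h g hg
  rw [this]
  refine MeasurableSet.biInter (Set.to_countable _) (fun g _ => ?_)
  by_cases hg : g ∈ kSets n k'
  · have : {ω : Finset (Fin n) → ℝ | g ∈ kSets n k' ∧ ω g ≤ p} =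
        {ω : Finset (Fin n) → ℝ | ω g ≤ p} := by ext ω; simp [hg]
    rw [this]
    exact measurableSet_le (measurable_pi_apply g) measurable_const
  · have : {ω : Finset (Fin n) → ℝ | g ∈ kSets n k' ∧ ω g ≤ p} = ∅ := by ext ω; simp [hg]
    rw [this]; exact MeasurableSet.empty

lemma cluster_event_eq {F : UnifHypergraph k} {n r : ℕ} {p : ℝ} {f : Finset (Fin n)}
    {c : Fin r → Finset (Finset (Fin n))} (hc : ValidSeq F f r c) :
    {ω : Finset (Fin n) → ℝ | IsCluster F (Hnp n k p ω) f r c} =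
      {ω | Uc c ⊆ Hnp n k p ω} := by
  ext ω
  simp only [Set.mem_setOf_eq, isCluster_iff]
  exact ⟨fun h => h.2, fun h => ⟨hc, h⟩⟩

lemma cluster_event_empty {F : UnifHypergraph k} {n r : ℕ} {p : ℝ} {f : Finset (Fin n)}
    {c : Fin r → Finset (Finset (Fin n))} (hc : ¬ ValidSeq F f r c) :
    {ω : Finset (Fin n) → ℝ | IsCluster F (Hnp n k p ω) f r c} = ∅ := by
  ext ω
  simp only [Set.mem_setOf_eq, isCluster_iff, Set.mem_empty_iff_false, iff_false]
  rintro ⟨h, -⟩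
  exact hc h

lemma cluster_event_measurable {F : UnifHypergraph k} {n r : ℕ} {p : ℝ} {f : Finset (Fin n)}
    (c : Fin r → Finset (Finset (Fin n))) :
    MeasurableSet {ω : Finset (Fin n) → ℝ | IsCluster F (Hnp n k p ω) f r c} := by
  by_cases hc : ValidSeq F f r c
  · rw [cluster_event_eq hc]; exact measurable_subset_event _
  · rw [cluster_event_empty hc]; exact MeasurableSet.empty

lemma integral_clusterCount (F : UnifHypergraph k) (n r : ℕ) {p : ℝ}
    (hp0 : 0 ≤ p) (hp1 : p ≤ 1) (f : Finset (Fin n)) :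
    ∫ ω, (clusterCount F (Hnp n k p ω) f r : ℝ) ∂ birthμ n =
      ∑ c ∈ (Finset.univ.filter fun c : Fin r → Finset (Finset (Fin n)) =>
        ValidSeq F f r c), p ^ (Uc c).card := by
  have hpt : ∀ ω : Finset (Fin n) → ℝ,
      (clusterCount F (Hnp n k p ω) f r : ℝ) =
      ∑ c ∈ (Finset.univ : Finset (Fin r → Finset (Finset (Fin n)))),
        Set.indicator {ω' | IsCluster F (Hnp n k p ω') f r c} (1 : (Finset (Fin n) → ℝ) → ℝ) ω := by
    intro ω
    have h1 : {c : Fin r → Finset (Finset (Fin n)) | IsCluster F (Hnp n k p ω) f r c} =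
        ↑(Finset.univ.filter fun c : Fin r → Finset (Finset (Fin n)) =>
          IsCluster F (Hnp n k p ω) f r c) := by
      ext c; simp
    rw [clusterCount, h1, Set.ncard_coe_finset, Finset.card_filter]
    push_cast
    apply Finset.sum_congr rfl
    intro c _
    by_cases hc : IsCluster F (Hnp n k p ω) f r c
    · simp [hc, Set.indicator_of_mem, Set.mem_setOf_eq]
    · simp [hc]
  simp only [hpt]
  rw [MeasureTheory.integral_finset_sum]
  · have hterm : ∀ c : Fin r → Finset (Finset (Fin n)),
        (∫ ω, Set.indicator {ω' | IsCluster F (Hnp n k p ω') f r c}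
          (1 : (Finset (Fin n) → ℝ) → ℝ) ω ∂ birthμ n) =
        if ValidSeq F f r c then p ^ (Uc c).card else 0 := by
      intro c
      rw [MeasureTheory.integral_indicator_one (cluster_event_measurable c)]
      by_cases hc : ValidSeq F f r c
      · rw [cluster_event_eq hc, if_pos hc, measureReal_def,
          measure_subset_Hnp hp0 hp1 (Uc_subset_kSets hc),
          ENNReal.toReal_pow, ENNReal.toReal_ofReal hp0]
      · rw [cluster_event_empty hc, if_neg hc]
        simp
    simp only [hterm]
    rw [Finset.sum_filter]
  · intro c _
    exact (integrable_const (1:ℝ)).indicator (cluster_event_measurable c)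

end Prob


/-! ### Counting machinery -/

section Count

open Finset

variable {k : ℕ}

lemma sum_image_le_nonneg {α β : Type*} [DecidableEq β] {s : Finset α} {f : α → β}
    {g : β → ℝ} (hg : ∀ b, 0 ≤ g b) : ∑ b ∈ s.image f, g b ≤ ∑ a ∈ s, g (f a) := by
  classical
  induction s using Finset.induction_on with
  | empty => simp
  | insert a s ha ih =>
    rw [Finset.image_insert, Finset.sum_insert ha]
    by_cases hfa : f a ∈ s.image f
    · rw [Finset.insert_eq_self.mpr hfa]
      exact le_add_of_nonneg_of_le (hg _) ih
    · rw [Finset.sum_insert hfa]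
      exact add_le_add_right ih _

lemma edgeMap_injOn {F : UnifHypergraph k} {n : ℕ} {φ : ℕ → Fin n}
    (hinj : Set.InjOn φ F.verts) :
    Set.InjOn (fun e : Finset ℕ => e.image φ) F.edges := by
  intro e₁ h₁ e₂ h₂ hee
  simp only [Finset.mem_coe] at h₁ h₂
  have key : ∀ e₁ e₂ : Finset ℕ, e₁ ∈ F.edges → e₂ ∈ F.edges →
      e₁.image φ = e₂.image φ → e₁ ⊆ e₂ := by
    intro e₁ e₂ h₁ h₂ hee x hx
    have : φ x ∈ e₂.image φ := hee ▸ Finset.mem_image_of_mem φ hx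
    rcases Finset.mem_image.mp this with ⟨y, hy, hxy⟩
    have := hinj (F.edge_sub e₂ h₂ hy) (F.edge_sub e₁ h₁ hx) hxy
    rwa [this] at hy
  exact Finset.Subset.antisymm (key e₁ e₂ h₁ h₂ hee) (key e₂ e₁ h₂ h₁ hee.symm)

/-- Extension of a map on the vertex subtype to all of `ℕ`. -/
def extendV (F : UnifHypergraph k) {n : ℕ} (hn : 0 < n) (ψ : {x // x ∈ F.verts} → Fin n) :
    ℕ → Fin n :=
  fun x => if hx : x ∈ F.verts then ψ ⟨x, hx⟩ else ⟨0, hn⟩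

lemma extendV_mem {F : UnifHypergraph k} {n : ℕ} (hn : 0 < n)
    (ψ : {x // x ∈ F.verts} → Fin n) {x : ℕ} (hx : x ∈ F.verts) :
    extendV F hn ψ x = ψ ⟨x, hx⟩ := dif_pos hx

/-- The edge of `F` mapped by `φ` onto `f` (junk if none). -/
def patE0 (F : UnifHypergraph k) {n : ℕ} (f : Finset (Fin n)) (φ : ℕ → Fin n) : Finset ℕ :=
  if hx : ∃ e ∈ F.edges, e.image φ = f then hx.choose else ∅

/-- Vertices of `F` mapped into the vertex set of `D`. -/
def patW (F : UnifHypergraph k) {n : ℕ} (D : Finset (Finset (Fin n))) (φ : ℕ → Fin n) :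
    Finset ℕ :=
  F.verts.filter fun x => φ x ∈ D.sup id

/-- Edges of `F` mapped into `D`. -/
def patE (F : UnifHypergraph k) {n : ℕ} (D : Finset (Finset (Fin n))) (φ : ℕ → Fin n) :
    Finset (Finset ℕ) :=
  F.edges.filter fun e => e.image φ ∈ D

/-- Admissible overlap patterns. -/
def patterns (F : UnifHypergraph k) : Finset (Finset ℕ × Finset ℕ × Finset (Finset ℕ)) :=
  (F.edges ×ˢ F.verts.powerset ×ˢ F.edges.powerset).filter fun T =>
    T.1 ∈ T.2.2 ∧ T.1 ⊆ T.2.1 ∧ T.2.2 ≠ F.edges ∧ ∀ e ∈ T.2.2, e ⊆ T.2.1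

/-- The bound associated to an overlap pattern. -/
def patTerm (F : UnifHypergraph k) (n M : ℕ) (p : ℝ) (T : Finset ℕ × Finset ℕ × Finset (Finset ℕ)) :
    ℝ :=
  ((k ^ k * M ^ (T.2.1.card - k) * n ^ (F.verts.card - T.2.1.card) : ℕ) : ℝ) *
    p ^ (F.edges.card - T.2.2.card)

lemma patE0_spec {F : UnifHypergraph k} {n : ℕ} {f : Finset (Fin n)} {φ : ℕ → Fin n}
    (hf : f ∈ copyEdges F φ) :
    patE0 F f φ ∈ F.edges ∧ (patE0 F f φ).image φ = f := by
  rcases Finset.mem_image.mp hf with ⟨e, he, hef⟩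
  have hx : ∃ e ∈ F.edges, e.image φ = f := ⟨e, he, hef⟩
  rw [patE0, dif_pos hx]
  exact hx.choose_spec

lemma pat_mem_patterns {F : UnifHypergraph k} {n : ℕ} {f : Finset (Fin n)}
    {D : Finset (Finset (Fin n))} {φ : ℕ → Fin n} (hfD : f ∈ D)
    (hfA : f ∈ copyEdges F φ) (hns : ¬ copyEdges F φ ⊆ D) :
    (patE0 F f φ, patW F D φ, patE F D φ) ∈ patterns F := by
  obtain ⟨he0, he0f⟩ := patE0_spec hfA
  have hfVD : f ⊆ D.sup id := by
    intro g hg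
    exact Finset.mem_sup.mpr ⟨f, hfD, hg⟩
  refine Finset.mem_filter.mpr ⟨?_, ?_, ?_, ?_, ?_⟩
  · refine Finset.mem_product.mpr ⟨he0, Finset.mem_product.mpr ⟨?_, ?_⟩⟩
    · exact Finset.mem_powerset.mpr (Finset.filter_subset _ _)
    · exact Finset.mem_powerset.mpr (Finset.filter_subset _ _)
  · exact Finset.mem_filter.mpr ⟨he0, by rw [he0f]; exact hfD⟩
  · intro x hx
    refine Finset.mem_filter.mpr ⟨F.edge_sub _ he0 hx, ?_⟩
    exact hfVD (he0f ▸ Finset.mem_image_of_mem φ hx)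
  · intro hEeq
    have hEeq' : patE F D φ = F.edges := hEeq
    rcases Finset.not_subset.mp hns with ⟨g, hgA, hgD⟩
    rcases Finset.mem_image.mp hgA with ⟨e₁, he₁, hge⟩
    have : e₁ ∈ patE F D φ := hEeq' ▸ he₁
    exact hgD (hge ▸ (Finset.mem_filter.mp this).2)
  · intro e he x hx
    have he' := Finset.mem_filter.mp he
    refine Finset.mem_filter.mpr ⟨F.edge_sub _ he'.1 hx, ?_⟩
    exact Finset.mem_sup.mpr ⟨e.image φ, he'.2, Finset.mem_image_of_mem φ hx⟩

lemma step_sum_le (F : UnifHypergraph k) {n : ℕ} (hn : 0 < n) {p : ℝ} (hp0 : 0 ≤ p)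
    (hp1 : p ≤ 1) {f : Finset (Fin n)} (hfk : f.card = k) {D : Finset (Finset (Fin n))}
    (hfD : f ∈ D) {M : ℕ} (hM : (D.sup id).card ≤ M) :
    ∑ A ∈ (Finset.univ.filter fun A : Finset (Finset (Fin n)) => ExtOK F f D A),
      p ^ (A \ D).card ≤ ∑ T ∈ patterns F, patTerm F n M p T := by
  classical
  set Amap : ({x // x ∈ F.verts} → Fin n) → Finset (Finset (Fin n)) :=
    fun ψ => copyEdges F (extendV F hn ψ) with hAmap
  set ΨOK : Finset ({x // x ∈ F.verts} → Fin n) :=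
    Finset.univ.filter fun ψ =>
      Set.InjOn (extendV F hn ψ) F.verts ∧ ExtOK F f D (Amap ψ) with hΨOK
  set pat : ({x // x ∈ F.verts} → Fin n) → Finset ℕ × Finset ℕ × Finset (Finset ℕ) :=
    fun ψ => (patE0 F f (extendV F hn ψ), patW F D (extendV F hn ψ),
      patE F D (extendV F hn ψ)) with hpat
  have hsub : (Finset.univ.filter fun A : Finset (Finset (Fin n)) => ExtOK F f D A) ⊆
      ΨOK.image Amap := by
    intro A hA
    have hA' := (Finset.mem_filter.mp hA).2
    obtain ⟨⟨φ, hinj, hAeq⟩, hfA, hns⟩ := hA'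
    set ψ : {x // x ∈ F.verts} → Fin n := fun x => φ ↑x with hψ
    have hagree : ∀ x ∈ F.verts, φ x = extendV F hn ψ x := by
      intro x hx
      rw [extendV_mem hn ψ hx]
    have hcopy : Amap ψ = A := by
      rw [hAmap, hAeq]
      exact (copyEdges_congr hagree).symm
    have hinj' : Set.InjOn (extendV F hn ψ) F.verts := by
      intro x hx y hy hxy
      apply hinj hx hy
      rwa [hagree x hx, hagree y hy]
    refine Finset.mem_image.mpr ⟨ψ, Finset.mem_filter.mpr ⟨Finset.mem_univ _, hinj', ?_⟩, hcopy⟩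
    rw [hcopy]
    exact ⟨⟨φ, hinj, hAeq⟩, hfA, hns⟩
  have hnonneg : ∀ A : Finset (Finset (Fin n)), 0 ≤ p ^ (A \ D).card :=
    fun A => pow_nonneg hp0 _
  calc
    ∑ A ∈ (Finset.univ.filter fun A : Finset (Finset (Fin n)) => ExtOK F f D A),
        p ^ (A \ D).card
      ≤ ∑ A ∈ ΨOK.image Amap, p ^ (A \ D).card :=
        Finset.sum_le_sum_of_subset_of_nonneg hsub (fun A _ _ => hnonneg A)
    _ ≤ ∑ ψ ∈ ΨOK, p ^ (Amap ψ \ D).card := sum_image_le_nonneg hnonneg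
    _ ≤ ∑ ψ ∈ ΨOK, p ^ (F.edges.card - (patE F D (extendV F hn ψ)).card) := by
        apply Finset.sum_le_sum
        intro ψ hψm
        have hinj' := ((Finset.mem_filter.mp hψm).2).1
        apply pow_le_pow_of_le_one hp0 hp1
        -- h - h' ≤ |Amap ψ \ D|
        have himg : (F.edges \ patE F D (extendV F hn ψ)).image
            (fun e => e.image (extendV F hn ψ)) ⊆ Amap ψ \ D := by
          intro g hg
          rcases Finset.mem_image.mp hg with ⟨e, he, rfl⟩
          have he' := Finset.mem_sdiff.mp he
          refine Finset.mem_sdiff.mpr ⟨Finset.mem_image_of_mem _ he'.1, ?_⟩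
          intro hgD
          exact he'.2 (Finset.mem_filter.mpr ⟨he'.1, hgD⟩)
        have hcard : (F.edges \ patE F D (extendV F hn ψ)).card =
            ((F.edges \ patE F D (extendV F hn ψ)).image
              (fun e => e.image (extendV F hn ψ))).card := by
          rw [Finset.card_image_of_injOn ((edgeMap_injOn hinj').mono ?_)]
          exact_mod_cast Finset.sdiff_subset
        rw [Finset.card_sdiff_of_subset
          (show patE F D (extendV F hn ψ) ⊆ F.edges from Finset.filter_subset _ _)] at hcard
        rw [hcard]
        exact Finset.card_le_card himg
    _ = ∑ T ∈ patterns F, ∑ ψ ∈ ΨOK.filter (fun ψ => pat ψ = T),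
          p ^ (F.edges.card - (patE F D (extendV F hn ψ)).card) := by
        rw [Finset.sum_fiberwise_of_maps_to]
        intro ψ hψm
        have h2 := (Finset.mem_filter.mp hψm).2
        obtain ⟨hinj', ⟨hshape, hfA, hns⟩⟩ := h2
        exact pat_mem_patterns hfD hfA hns
    _ ≤ ∑ T ∈ patterns F, patTerm F n M p T := by
        apply Finset.sum_le_sum
        intro T hT
        -- constant summand on the fiber
        have hconst : ∀ ψ ∈ ΨOK.filter (fun ψ => pat ψ = T),
            p ^ (F.edges.card - (patE F D (extendV F hn ψ)).card) =
            p ^ (F.edges.card - T.2.2.card) := by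
          intro ψ hψm
          have := (Finset.mem_filter.mp hψm).2
          rw [hpat] at this
          have : patE F D (extendV F hn ψ) = T.2.2 := by
            have := congrArg (fun x : Finset ℕ × Finset ℕ × Finset (Finset ℕ) => x.2.2) this
            simpa using this
          rw [this]
        rw [Finset.sum_congr rfl hconst, Finset.sum_const, nsmul_eq_mul]
        -- card of the fiber
        set B : {x // x ∈ F.verts} → Finset (Fin n) :=
          fun x => if ↑x ∈ T.1 then f else if ↑x ∈ T.2.1 then D.sup id else Finset.univ
            with hB
        have hfib : ΨOK.filter (fun ψ => pat ψ = T) ⊆ Fintype.piFinset B := by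
          intro ψ hψm
          have hm := Finset.mem_filter.mp hψm
          have hpT := hm.2
          have hm2 := (Finset.mem_filter.mp hm.1).2
          obtain ⟨hinj', ⟨hshape, hfA, hns⟩⟩ := hm2
          rw [Fintype.mem_piFinset]
          intro x
          rw [hB]
          by_cases hx1 : ↑x ∈ T.1
          · simp only [hx1, if_true]
            have hT1 : T.1 = patE0 F f (extendV F hn ψ) := by
              have := congrArg (fun y : Finset ℕ × Finset ℕ × Finset (Finset ℕ) => y.1) hpT
              simpa using this.symm
            obtain ⟨he0, he0f⟩ := patE0_spec (φ := extendV F hn ψ) hfA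
            have : ψ x = extendV F hn ψ ↑x := (extendV_mem hn ψ x.2).symm
            rw [this, ← he0f]
            exact Finset.mem_image_of_mem _ (hT1 ▸ hx1)
          · simp only [hx1, if_false]
            by_cases hx2 : ↑x ∈ T.2.1
            · simp only [hx2, if_true]
              have hT2 : T.2.1 = patW F D (extendV F hn ψ) := by
                have := congrArg
                  (fun y : Finset ℕ × Finset ℕ × Finset (Finset ℕ) => y.2.1) hpT
                simpa using this.symm
              have : ↑x ∈ patW F D (extendV F hn ψ) := hT2 ▸ hx2
              have := (Finset.mem_filter.mp this).2
              rwa [extendV_mem hn ψ x.2] at this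
            · simp [hx2]
        have hcardle : (ΨOK.filter (fun ψ => pat ψ = T)).card ≤
            k ^ k * M ^ (T.2.1.card - k) * n ^ (F.verts.card - T.2.1.card) := by
          refine le_trans (Finset.card_le_card hfib) ?_
          rw [Fintype.card_piFinset]
          -- compute/bound the product
          have hTpat := Finset.mem_filter.mp hT
          have hTmem := Finset.mem_product.mp hTpat.1
          have hT1e : T.1 ∈ F.edges := hTmem.1
          have hT21 : T.2.1 ⊆ F.verts := Finset.mem_powerset.mp (Finset.mem_product.mp hTmem.2).1
          obtain ⟨-, hT12, -, -⟩ := hTpat.2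
          have hT1card : T.1.card = k := F.edge_card _ hT1e
          have hprodeq : ∏ x : {x // x ∈ F.verts}, (B x).card =
              ∏ y ∈ F.verts, (if y ∈ T.1 then f else
                if y ∈ T.2.1 then D.sup id else Finset.univ).card := by
            rw [Finset.univ_eq_attach]
            rw [← Finset.prod_attach F.verts
              (fun y => (if y ∈ T.1 then f else
                if y ∈ T.2.1 then D.sup id else Finset.univ).card)]
          rw [hprodeq]
          set g : ℕ → ℕ := fun y => (if y ∈ T.1 then f else
            if y ∈ T.2.1 then D.sup id else Finset.univ).card with hg
          have hsplit1 : ∏ y ∈ F.verts, g y =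
              (∏ y ∈ F.verts \ T.2.1, g y) * ∏ y ∈ T.2.1, g y :=
            (Finset.prod_sdiff hT21).symm
          have hsplit2 : ∏ y ∈ T.2.1, g y =
              (∏ y ∈ T.2.1 \ T.1, g y) * ∏ y ∈ T.1, g y :=
            (Finset.prod_sdiff hT12).symm
          have hb1 : ∏ y ∈ T.1, g y = k ^ k := by
            have hgy : ∀ y ∈ T.1, g y = k := by
              intro y hy
              simp [hg, hy, hfk]
            rw [Finset.prod_congr rfl hgy, Finset.prod_const, hT1card]
          have hb2 : ∏ y ∈ T.2.1 \ T.1, g y ≤ M ^ (T.2.1.card - k) := by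
            have : ∀ y ∈ T.2.1 \ T.1, g y ≤ M := by
              intro y hy
              have hy' := Finset.mem_sdiff.mp hy
              simp only [hg, hy'.2, if_false, hy'.1, if_true]
              exact hM
            calc ∏ y ∈ T.2.1 \ T.1, g y ≤ ∏ _y ∈ T.2.1 \ T.1, M :=
                  Finset.prod_le_prod' this
              _ = M ^ (T.2.1.card - k) := by
                  rw [Finset.prod_const, Finset.card_sdiff_of_subset hT12, hT1card]
          have hb3 : ∏ y ∈ F.verts \ T.2.1, g y = n ^ (F.verts.card - T.2.1.card) := by
            have : ∀ y ∈ F.verts \ T.2.1, g y = n := by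
              intro y hy
              have hy' := Finset.mem_sdiff.mp hy
              have hy1 : y ∉ T.1 := fun hc => hy'.2 (hT12 hc)
              simp [hg, hy1, hy'.2]
            rw [Finset.prod_congr rfl this, Finset.prod_const, Finset.card_sdiff_of_subset hT21]
          calc ∏ y ∈ F.verts, g y
              = (∏ y ∈ F.verts \ T.2.1, g y) * ((∏ y ∈ T.2.1 \ T.1, g y) * ∏ y ∈ T.1, g y) := by
                rw [hsplit1, hsplit2]
            _ ≤ n ^ (F.verts.card - T.2.1.card) * (M ^ (T.2.1.card - k) * k ^ k) := by
                rw [hb3, hb1]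
                exact Nat.mul_le_mul_left _ (Nat.mul_le_mul_right _ hb2)
            _ = k ^ k * M ^ (T.2.1.card - k) * n ^ (F.verts.card - T.2.1.card) := by ring
        rw [patTerm]
        apply mul_le_mul_of_nonneg_right _ (pow_nonneg hp0 _)
        exact_mod_cast hcardle

end Count


/-! ### The induction over cluster length -/

section Ind

open Finset

variable {k : ℕ}

lemma Uc_snoc {n r : ℕ} (c : Fin r → Finset (Finset (Fin n))) (A : Finset (Finset (Fin n))) :
    Uc (Fin.snoc c A) = Uc c ∪ A := by
  ext g
  rw [mem_Uc, Finset.mem_union, mem_Uc]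
  constructor
  · rintro ⟨i, hi⟩
    rcases Fin.eq_castSucc_or_eq_last i with ⟨j, rfl⟩ | rfl
    · rw [Fin.snoc_castSucc] at hi
      exact Or.inl ⟨j, hi⟩
    · rw [Fin.snoc_last] at hi
      exact Or.inr hi
  · rintro (⟨j, hj⟩ | hA)
    · exact ⟨Fin.castSucc j, by rwa [Fin.snoc_castSucc]⟩
    · exact ⟨Fin.last r, by rwa [Fin.snoc_last]⟩

lemma validSeq_snoc {F : UnifHypergraph k} {n r : ℕ} (hr : 1 ≤ r) {f : Finset (Fin n)}
    (c : Fin r → Finset (Finset (Fin n))) (A : Finset (Finset (Fin n))) :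
    ValidSeq F f (r+1) (Fin.snoc c A) ↔ ValidSeq F f r c ∧ ExtOK F f (Uc c) A := by
  constructor
  · rintro ⟨H1, H2⟩
    refine ⟨⟨fun i => ?_, fun i hi => ?_⟩, ?_, ?_, ?_⟩
    · have := H1 (Fin.castSucc i)
      rwa [Fin.snoc_castSucc] at this
    · have hpos : 0 < ((Fin.castSucc i : Fin (r+1)) : ℕ) := by
        rwa [Fin.coe_castSucc]
      obtain ⟨g, hg, hgn⟩ := H2 (Fin.castSucc i) hpos
      rw [Fin.snoc_castSucc] at hg
      refine ⟨g, hg, fun j hj => ?_⟩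
      have := hgn (Fin.castSucc j) (by rwa [Fin.castSucc_lt_castSucc_iff])
      rwa [Fin.snoc_castSucc] at this
    · have := (H1 (Fin.last r)).1
      rwa [Fin.snoc_last] at this
    · have := (H1 (Fin.last r)).2
      rwa [Fin.snoc_last] at this
    · have hpos : 0 < ((Fin.last r : Fin (r+1)) : ℕ) := hr
      obtain ⟨g, hg, hgn⟩ := H2 (Fin.last r) hpos
      rw [Fin.snoc_last] at hg
      intro hsub
      have hgU : g ∈ Uc c := hsub hg
      rcases mem_Uc.mp hgU with ⟨j, hj⟩
      have := hgn (Fin.castSucc j) (Fin.castSucc_lt_last j)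
      rw [Fin.snoc_castSucc] at this
      exact this hj
  · rintro ⟨⟨V1, V2⟩, hshape, hfA, hns⟩
    constructor
    · intro i
      refine Fin.lastCases ?_ ?_ i
      · rw [Fin.snoc_last]; exact ⟨hshape, hfA⟩
      · intro j; rw [Fin.snoc_castSucc]; exact V1 j
    · intro i
      refine Fin.lastCases ?_ ?_ i
      · intro _
        rcases Finset.not_subset.mp hns with ⟨g, hgA, hgU⟩
        refine ⟨g, by rwa [Fin.snoc_last], fun j hj => ?_⟩
        obtain ⟨j', rfl⟩ := Fin.exists_castSucc_eq.mpr (Fin.ne_of_lt hj)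
        rw [Fin.snoc_castSucc]
        exact fun hc => hgU (mem_Uc.mpr ⟨j', hc⟩)
      · intro i' hpos
        rw [Fin.coe_castSucc] at hpos
        obtain ⟨g, hg, hgn⟩ := V2 i' hpos
        refine ⟨g, by rwa [Fin.snoc_castSucc], fun j hj => ?_⟩
        have hjne : j ≠ Fin.last r :=
          Fin.ne_of_lt (lt_of_lt_of_le hj (Fin.le_last _))
        obtain ⟨j', rfl⟩ := Fin.exists_castSucc_eq.mpr hjne
        rw [Fin.snoc_castSucc]
        exact hgn j' (by rwa [Fin.castSucc_lt_castSucc_iff] at hj)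

lemma sum_validSeq_succ (F : UnifHypergraph k) {n : ℕ} (f : Finset (Fin n)) {r : ℕ}
    (hr : 1 ≤ r) (p : ℝ) :
    ∑ c ∈ (Finset.univ.filter fun c : Fin (r+1) → Finset (Finset (Fin n)) =>
        ValidSeq F f (r+1) c), p ^ (Uc c).card =
    ∑ c ∈ (Finset.univ.filter fun c : Fin r → Finset (Finset (Fin n)) =>
        ValidSeq F f r c), (p ^ (Uc c).card *
      ∑ A ∈ (Finset.univ.filter fun A => ExtOK F f (Uc c) A), p ^ (A \ Uc c).card) := by
  classical
  rw [Finset.sum_filter, Finset.sum_filter]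
  rw [← (Fin.snocEquiv (fun _ => Finset (Finset (Fin n)))).sum_comp
    (fun c => if ValidSeq F f (r+1) c then p ^ (Uc c).card else 0)]
  rw [Fintype.sum_prod_type]
  rw [Finset.sum_comm]
  apply Finset.sum_congr rfl
  intro c _
  by_cases hc : ValidSeq F f r c
  · rw [if_pos hc, Finset.sum_filter, Finset.mul_sum]
    apply Finset.sum_congr rfl
    intro A _
    rw [mul_ite, mul_zero]
    have happ : (Fin.snocEquiv (fun _ => Finset (Finset (Fin n)))) (A, c) = Fin.snoc c A := by
      ext i
      simp [Fin.snocEquiv]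
    rw [happ, validSeq_snoc hr c A]
    by_cases hA : ExtOK F f (Uc c) A
    · rw [if_pos ⟨hc, hA⟩, if_pos hA]
      rw [Uc_snoc, ← pow_add]
      congr 1
      rw [Finset.union_comm, ← Finset.card_sdiff_add_card]
      ring
    · rw [if_neg (fun h => hA h.2), if_neg hA]
  · rw [if_neg hc]
    rw [Finset.sum_eq_zero]
    intro A _
    have happ : (Fin.snocEquiv (fun _ => Finset (Finset (Fin n)))) (A, c) = Fin.snoc c A := by
      ext i
      simp [Fin.snocEquiv]
    rw [happ]
    rw [if_neg (fun h => hc ((validSeq_snoc hr c A).mp h).1)]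

end Ind


section Master

open Finset

variable {k : ℕ}

lemma card_Uc_le {F : UnifHypergraph k} {n r : ℕ} {f : Finset (Fin n)}
    {c : Fin r → Finset (Finset (Fin n))} (hc : ValidSeq F f r c) :
    (Uc c).card ≤ F.edges.card * r := by
  have h1 : Uc c = Finset.univ.biUnion c := by
    rw [Uc, Finset.sup_eq_biUnion]
  rw [h1]
  refine le_trans Finset.card_biUnion_le ?_
  have : ∀ i ∈ (Finset.univ : Finset (Fin r)), (c i).card = F.edges.card := by
    intro i _
    rcases (hc.1 i).1 with ⟨φ, hinj, heq⟩
    rw [heq]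
    exact card_copyEdges hinj
  rw [Finset.sum_congr rfl this, Finset.sum_const, Finset.card_univ, Fintype.card_fin,
    smul_eq_mul, mul_comm]

lemma card_mem_Uc {F : UnifHypergraph k} {n r : ℕ} {f : Finset (Fin n)}
    {c : Fin r → Finset (Finset (Fin n))} (hc : ValidSeq F f r c)
    {g : Finset (Fin n)} (hg : g ∈ Uc c) : g.card = k := by
  rcases mem_Uc.mp hg with ⟨i, hi⟩
  rcases (hc.1 i).1 with ⟨φ, hinj, hA⟩
  exact card_of_mem_copyEdges hinj (hA ▸ hi)

lemma card_supV_le {n : ℕ} {D : Finset (Finset (Fin n))} (hD : ∀ g ∈ D, g.card = k) :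
    (D.sup id).card ≤ k * D.card := by
  rw [Finset.sup_eq_biUnion]
  refine le_trans Finset.card_biUnion_le ?_
  have : ∀ g ∈ D, (id g).card = k := hD
  rw [Finset.sum_congr rfl this, Finset.sum_const, smul_eq_mul, mul_comm]

lemma total_le (F : UnifHypergraph k) {n : ℕ} (hn : 0 < n) {p q : ℝ} (hp0 : 0 ≤ p) (hp1 : p ≤ 1)
    (hq0 : 0 ≤ q) (hh2 : 2 ≤ F.edges.card)
    {f : Finset (Fin n)} (hfk : f.card = k) (r₀ : ℕ) {M : ℕ}
    (hM : k * (F.edges.card * r₀) + k ≤ M)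
    (hq : ∀ D : Finset (Finset (Fin n)), f ∈ D → (D.sup id).card ≤ M →
      ∑ A ∈ (Finset.univ.filter fun A : Finset (Finset (Fin n)) => ExtOK F f D A),
        p ^ (A \ D).card ≤ q) :
    ∀ r, 1 ≤ r → r ≤ r₀ →
      ∑ c ∈ (Finset.univ.filter fun c : Fin r → Finset (Finset (Fin n)) => ValidSeq F f r c),
        p ^ (Uc c).card ≤ p * q ^ r := by
  have hkM : k ≤ M := le_trans (Nat.le_add_left _ _) hM
  -- the inner-sum hypothesis applies to the union of a valid sequence
  have happly : ∀ r, 1 ≤ r → r ≤ r₀ →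
      ∀ c : Fin r → Finset (Finset (Fin n)), ValidSeq F f r c →
      ∑ A ∈ (Finset.univ.filter fun A : Finset (Finset (Fin n)) => ExtOK F f (Uc c) A),
        p ^ (A \ Uc c).card ≤ q := by
    intro r hr hrr c hc
    have hi0 : (⟨0, hr⟩ : Fin r) = ⟨0, hr⟩ := rfl
    apply hq
    · exact mem_Uc.mpr ⟨⟨0, hr⟩, (hc.1 ⟨0, hr⟩).2⟩
    · refine le_trans (card_supV_le (fun g hg => card_mem_Uc hc hg)) ?_
      refine le_trans (Nat.mul_le_mul_left k (card_Uc_le hc)) ?_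
      refine le_trans (Nat.mul_le_mul_left k (Nat.mul_le_mul_left _ hrr)) ?_
      exact le_trans (Nat.le_add_right _ _) hM
  -- base case
  have hbase : ∑ c ∈ (Finset.univ.filter
      fun c : Fin 1 → Finset (Finset (Fin n)) => ValidSeq F f 1 c),
      p ^ (Uc c).card ≤ p * q := by
    have hUc1 : ∀ c : Fin 1 → Finset (Finset (Fin n)), Uc c = c 0 := by
      intro c
      rw [Uc]
      have : (Finset.univ : Finset (Fin 1)) = {0} := rfl
      rw [this, Finset.sup_singleton]
    rw [Finset.sum_filter]
    rw [← Equiv.sum_comp (Equiv.funUnique (Fin 1) (Finset (Finset (Fin n)))).symm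
      (fun c => if ValidSeq F f 1 c then p ^ (Uc c).card else 0)]
    have hstep : ∀ A : Finset (Finset (Fin n)),
        (if ValidSeq F f 1 ((Equiv.funUnique (Fin 1) (Finset (Finset (Fin n)))).symm A)
          then p ^ (Uc ((Equiv.funUnique (Fin 1) (Finset (Finset (Fin n)))).symm A)).card
          else 0) ≤
        if ExtOK F f {f} A then p * p ^ (A \ {f}).card else 0 := by
      intro A
      by_cases hA : ValidSeq F f 1 ((Equiv.funUnique (Fin 1) (Finset (Finset (Fin n)))).symm A)
      · rw [if_pos hA]
        have hcA : ((Equiv.funUnique (Fin 1) (Finset (Finset (Fin n)))).symm A) 0 = A := rfl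
        obtain ⟨hsh, hfA⟩ := hA.1 0
        rw [hcA] at hsh hfA
        have hAcard : A.card = F.edges.card := by
          rcases hsh with ⟨φ, hinj, heq⟩
          rw [heq]
          exact card_copyEdges hinj
        have hns : ¬ A ⊆ {f} := by
          intro hsub
          have := Finset.card_le_card hsub
          rw [hAcard, Finset.card_singleton] at this
          omega
        rw [if_pos ⟨hsh, hfA, hns⟩, hUc1]
        rw [hcA]
        have hc1 : (A.erase f).card + 1 = A.card := Finset.card_erase_add_one hfA
        have : A \ {f} = A.erase f := by
          rw [Finset.erase_eq]
        rw [this, ← hc1, pow_succ, mul_comm]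
      · rw [if_neg hA]
        split
        · positivity
        · exact le_refl 0
    refine le_trans (Finset.sum_le_sum (fun A _ => hstep A)) ?_
    rw [← Finset.sum_filter, ← Finset.mul_sum]
    refine mul_le_mul_of_nonneg_left ?_ hp0
    apply hq
    · exact Finset.mem_singleton_self f
    · rw [Finset.sup_singleton]
      exact le_trans (le_of_eq hfk) hkM
  -- induction
  intro r hr
  induction r with
  | zero => omega
  | succ m ih =>
    intro hle
    rcases Nat.eq_or_lt_of_le hr with h1 | h1
    · have : m = 0 := by omega
      subst this
      simpa [pow_one] using hbase
    · have hm : 1 ≤ m := by omega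
      have hmle : m ≤ r₀ := by omega
      have ihm := ih hm hmle
      rw [sum_validSeq_succ F f hm p]
      have hterm : ∀ c ∈ (Finset.univ.filter
          fun c : Fin m → Finset (Finset (Fin n)) => ValidSeq F f m c),
          p ^ (Uc c).card * (∑ A ∈ (Finset.univ.filter
            fun A : Finset (Finset (Fin n)) => ExtOK F f (Uc c) A),
            p ^ (A \ Uc c).card) ≤ p ^ (Uc c).card * q := by
        intro c hc
        exact mul_le_mul_of_nonneg_left
          (happly m hm hmle c (Finset.mem_filter.mp hc).2) (pow_nonneg hp0 _)
      refine le_trans (Finset.sum_le_sum hterm) ?_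
      rw [← Finset.sum_mul]
      calc (∑ c ∈ (Finset.univ.filter
            fun c : Fin m → Finset (Finset (Fin n)) => ValidSeq F f m c),
            p ^ (Uc c).card) * q ≤ (p * q ^ m) * q := by
              exact mul_le_mul_of_nonneg_right ihm hq0
        _ = p * q ^ (m + 1) := by ring

end Master


section Analytic

open Finset Filter Real

lemma tendsto_logpow_rpow_neg (a : ℝ) {b : ℝ} (hb : 0 < b) :
    Tendsto (fun n : ℕ => Real.log n ^ a * (n:ℝ) ^ (-b)) atTop (nhds 0) := by
  have h1 : Tendsto (fun x : ℝ => Real.log x ^ a / x ^ b) atTop (nhds 0) :=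
    (isLittleO_log_rpow_rpow_atTop a hb).tendsto_div_nhds_zero
  have h2 : Tendsto (fun n : ℕ => Real.log (n:ℝ) ^ a / (n:ℝ) ^ b) atTop (nhds 0) :=
    h1.comp tendsto_natCast_atTop_atTop
  apply h2.congr'
  filter_upwards [eventually_gt_atTop 0] with n hn
  rw [Real.rpow_neg (by positivity), div_eq_mul_inv]

lemma one_le_log_of_three_le {n : ℕ} (hn : 3 ≤ n) : 1 ≤ Real.log n := by
  have hn0 : (0:ℝ) < n := by positivity
  rw [Real.le_log_iff_exp_le hn0]
  have h1 : Real.exp 1 < 2.7182818286 := Real.exp_one_lt_d9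
  have h2 : (3:ℝ) ≤ n := by exact_mod_cast hn
  nlinarith

lemma pval_facts {k v h : ℕ} (hkv : k + 1 ≤ v) (hh : 2 ≤ h) {c₂ : ℝ} (hc₂ : 1 ≤ c₂)
    {n : ℕ} (hn : 3 ≤ n) :
    0 < pval c₂ k v h n ∧ pval c₂ k v h n ≤ 1 ∧
    pval c₂ k v h n ^ (h - 1) ≤ ((n:ℝ) ^ ((v:ℝ)-(k:ℝ)) * Real.log n)⁻¹ ∧
    ∀ a : ℕ, pval c₂ k v h n ^ a ≤
      ((n:ℝ) ^ ((v:ℝ)-(k:ℝ)) * Real.log n) ^ (-(a:ℝ)/((h:ℝ)-1)) := by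
  have hL : 1 ≤ Real.log n := one_le_log_of_three_le hn
  have hn1 : (1:ℝ) ≤ (n:ℝ) := by
    have : (3:ℝ) ≤ (n:ℝ) := by exact_mod_cast hn
    linarith
  have hvk : (1:ℝ) ≤ (v:ℝ) - (k:ℝ) := by
    have : (k:ℝ) + 1 ≤ (v:ℝ) := by exact_mod_cast hkv
    linarith
  have hnr : (1:ℝ) ≤ (n:ℝ) ^ ((v:ℝ)-(k:ℝ)) := Real.one_le_rpow hn1 (by linarith)
  set X : ℝ := (n:ℝ) ^ ((v:ℝ)-(k:ℝ)) * Real.log n with hX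
  have hX1 : 1 ≤ X := by
    calc (1:ℝ) = 1 * 1 := by ring
    _ ≤ X := by rw [hX]; exact mul_le_mul hnr hL (by norm_num) (by linarith)
  have hXpos : 0 < X := by linarith
  have hh1 : (1:ℝ) ≤ (h:ℝ) - 1 := by
    have : (2:ℝ) ≤ (h:ℝ) := by exact_mod_cast hh
    linarith
  have hexp : (0:ℝ) ≤ 1/((h:ℝ)-1) := by positivity
  set Y : ℝ := X ^ ((1:ℝ)/((h:ℝ)-1)) with hY
  have hY1 : 1 ≤ Y := Real.one_le_rpow hX1 hexp
  have hYpos : 0 < Y := by linarith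
  have hden : 1 ≤ c₂ * Y := by
    calc (1:ℝ) = 1 * 1 := by ring
    _ ≤ c₂ * Y := mul_le_mul hc₂ hY1 (by norm_num) (by linarith)
  have hdenpos : 0 < c₂ * Y := by linarith
  have hp : pval c₂ k v h n = (c₂ * Y)⁻¹ := by
    rw [pval, one_div]
  have hppos : 0 < pval c₂ k v h n := by rw [hp]; positivity
  have hple : pval c₂ k v h n ≤ 1 := by
    rw [hp]
    exact inv_le_one_of_one_le₀ hden
  have hYX : Y ^ (h - 1) = X := by
    rw [hY, ← Real.rpow_natCast (X ^ ((1:ℝ)/((h:ℝ)-1))) (h-1), ← Real.rpow_mul hXpos.le]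
    have hcast : ((h - 1 : ℕ) : ℝ) = (h:ℝ) - 1 := by
      have : 1 ≤ h := by omega
      push_cast [this]
      ring
    rw [hcast, one_div, inv_mul_cancel₀ (by linarith), Real.rpow_one]
  refine ⟨hppos, hple, ?_, ?_⟩
  · rw [hp, inv_pow]
    apply inv_anti₀ hXpos
    calc X = Y ^ (h-1) := hYX.symm
      _ ≤ (c₂ * Y) ^ (h-1) := by
          apply pow_le_pow_left₀ hYpos.le
          nlinarith
  · intro a
    have hpY : pval c₂ k v h n ≤ X ^ (-(1:ℝ)/((h:ℝ)-1)) := by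
      rw [hp, neg_div, Real.rpow_neg hXpos.le, ← hY]
      exact inv_anti₀ hYpos (by nlinarith)
    calc pval c₂ k v h n ^ a ≤ (X ^ (-(1:ℝ)/((h:ℝ)-1))) ^ a :=
          pow_le_pow_left₀ hppos.le hpY a
      _ = X ^ (-(a:ℝ)/((h:ℝ)-1)) := by
          rw [← Real.rpow_natCast (X ^ (-(1:ℝ)/((h:ℝ)-1))) a, ← Real.rpow_mul hXpos.le]
          congr 1
          ring

end Analytic


section PatternBounds

open Finset Filter Real

variable {k : ℕ}

lemma pattern_destruct {F : UnifHypergraph k} {T : Finset ℕ × Finset ℕ × Finset (Finset ℕ)}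
    (hT : T ∈ patterns F) :
    T.1 ∈ F.edges ∧ T.2.1 ⊆ F.verts ∧ T.2.2 ⊆ F.edges ∧ T.1 ∈ T.2.2 ∧ T.1 ⊆ T.2.1 ∧
      T.2.2 ≠ F.edges ∧ (∀ e ∈ T.2.2, e ⊆ T.2.1) := by
  have h := Finset.mem_filter.mp hT
  have hm := Finset.mem_product.mp h.1
  have hm2 := Finset.mem_product.mp hm.2
  exact ⟨hm.1, Finset.mem_powerset.mp hm2.1, Finset.mem_powerset.mp hm2.2,
    h.2.1, h.2.2.1, h.2.2.2.1, h.2.2.2.2⟩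

lemma pattern_w_eq_k {F : UnifHypergraph k} {T : Finset ℕ × Finset ℕ × Finset (Finset ℕ)}
    (hT : T ∈ patterns F) (hw : T.2.1.card = k) : T.2.2.card = 1 := by
  obtain ⟨hT1e, hT21, hT22, hT122, hT12, hTne, hTsub⟩ := pattern_destruct hT
  have hT1c : T.1.card = k := F.edge_card _ hT1e
  have : T.2.2 = {T.1} := by
    rw [Finset.eq_singleton_iff_unique_mem]
    refine ⟨hT122, fun e he => ?_⟩
    have he1 : e = T.2.1 := Finset.eq_of_subset_of_card_le (hTsub e he)
      (by rw [hw, F.edge_card e (hT22 he)])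
    have he2 : T.1 = T.2.1 := Finset.eq_of_subset_of_card_le hT12 (by rw [hw, hT1c])
    rw [he1, he2]
  rw [this, Finset.card_singleton]

lemma pattern_balance {F : UnifHypergraph k} (hbal : F.StrictlyBalanced)
    {T : Finset ℕ × Finset ℕ × Finset (Finset ℕ)}
    (hT : T ∈ patterns F) (hw : k+1 ≤ T.2.1.card) :
    ((T.2.2.card:ℝ) - 1) * ((F.verts.card:ℝ) - k) <
      ((F.edges.card:ℝ) - 1) * ((T.2.1.card:ℝ) - k) := by
  obtain ⟨hT1e, hT21, hT22, hT122, hT12, hTne, hTsub⟩ := pattern_destruct hT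
  set F' : UnifHypergraph k := ⟨T.2.1, T.2.2, hTsub, fun e he => F.edge_card e (hT22 he)⟩ with hF'
  have hsub : F'.IsSubgraph F := ⟨hT21, hT22⟩
  have hne : F' ≠ F := by
    intro hc
    exact hTne (congrArg UnifHypergraph.edges hc)
  have := hbal.2 F' hsub hne hw
  have hd1 : (0:ℝ) < (T.2.1.card:ℝ) - k := by
    have : (k:ℝ) + 1 ≤ (T.2.1.card:ℝ) := by exact_mod_cast hw
    linarith
  have hd2 : (0:ℝ) < (F.verts.card:ℝ) - k := by
    have : (k:ℝ) + 1 ≤ (F.verts.card:ℝ) := by exact_mod_cast hbal.1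
    linarith
  rw [div_lt_div_iff₀ hd1 hd2] at this
  exact this

set_option maxHeartbeats 2000000 in
lemma patTerm_eventually (F : UnifHypergraph k) (hk : 1 ≤ k) (hbal : F.StrictlyBalanced)
    (hh2 : 2 ≤ F.edges.card) {c₂ : ℝ} (hc₂ : 1 ≤ c₂) {C : ℝ} (hC : 0 < C)
    {T : Finset ℕ × Finset ℕ × Finset (Finset ℕ)} (hT : T ∈ patterns F) :
    ∀ᶠ n : ℕ in atTop,
      patTerm F n (k*(F.edges.card * ⌈Real.log n⌉₊)+k)
          (pval c₂ k F.verts.card F.edges.card n) T * (C * Real.sqrt (Real.log n)) ≤ 1 := by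
  obtain ⟨hT1e, hT21, hT22, hT122, hT12, hTne, hTsub⟩ := pattern_destruct hT
  have hv : k + 1 ≤ F.verts.card := hbal.1
  have hkw : k ≤ T.2.1.card := by
    rw [← F.edge_card T.1 hT1e]; exact Finset.card_le_card hT12
  have hwv : T.2.1.card ≤ F.verts.card := Finset.card_le_card hT21
  have hh'1 : 1 ≤ T.2.2.card := Finset.card_pos.mpr ⟨T.1, hT122⟩
  have hh'h : T.2.2.card < F.edges.card :=
    Finset.card_lt_card (Finset.ssubset_iff_subset_ne.mpr ⟨hT22, hTne⟩)
  set v := F.verts.card with hvdef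
  set h := F.edges.card with hhdef
  set w := T.2.1.card with hwdef
  set h' := T.2.2.card with hh'def
  clear_value v h w h'
  rcases eq_or_lt_of_le hkw with hwk | hwk
  · -- main case w = k
    have hwcard : T.2.1.card = k := by omega
    have hh'one : h' = 1 := by rw [hh'def]; exact pattern_w_eq_k hT hwcard
    have htend : Tendsto (fun n : ℕ => (C * (k:ℝ)^k) * Real.log n ^ (-(1/2:ℝ)))
        atTop (nhds 0) := by
      have h0 : Tendsto (fun x : ℝ => x ^ (-(1/2:ℝ))) atTop (nhds 0) :=
        tendsto_rpow_neg_atTop (by norm_num)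
      have h1 : Tendsto (fun n : ℕ => Real.log n ^ (-(1/2:ℝ))) atTop (nhds 0) :=
        h0.comp (Real.tendsto_log_atTop.comp tendsto_natCast_atTop_atTop)
      simpa using h1.const_mul (C * (k:ℝ)^k)
    filter_upwards [eventually_ge_atTop 3,
      htend.eventually_lt_const (by norm_num : (0:ℝ) < 1)] with n hn3 hlt
    obtain ⟨hp0, hp1, hpow, hpowa⟩ := pval_facts hv hh2 hc₂ hn3
    have hL : 1 ≤ Real.log n := one_le_log_of_three_le hn3
    have hLpos : (0:ℝ) < Real.log n := by linarith
    have hptle : patTerm F n (k*(h * ⌈Real.log n⌉₊)+k) (pval c₂ k v h n) T ≤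
        (k:ℝ)^k * (Real.log n)⁻¹ := by
      rw [patTerm]
      rw [← hvdef, ← hhdef, ← hwdef, ← hh'def]
      have hwk0 : w - k = 0 := by omega
      have hvw : v - w = v - k := by omega
      have hhh : h - h' = h - 1 := by omega
      rw [hwk0, hvw, hhh]
      push_cast
      rw [pow_zero, mul_one]
      have hnvk : ((n:ℝ))^((v - k : ℕ)) = (n:ℝ) ^ ((v:ℝ) - (k:ℝ)) := by
        rw [← Real.rpow_natCast (n:ℝ) (v - k), Nat.cast_sub (by omega)]
      calc (k:ℝ)^k * (n:ℝ)^(v-k) * pval c₂ k v h n ^ (h-1)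
          ≤ (k:ℝ)^k * (n:ℝ)^(v-k) * ((n:ℝ) ^ ((v:ℝ)-(k:ℝ)) * Real.log n)⁻¹ :=
            mul_le_mul_of_nonneg_left hpow (by positivity)
          _ = (k:ℝ)^k * (Real.log n)⁻¹ := by
            rw [hnvk, mul_inv, ← mul_assoc, mul_assoc ((k:ℝ)^k),
              mul_inv_cancel₀ (by positivity), mul_one]
    calc patTerm F n (k*(h * ⌈Real.log n⌉₊)+k) (pval c₂ k v h n) T *
          (C * Real.sqrt (Real.log n))
        ≤ ((k:ℝ)^k * (Real.log n)⁻¹) * (C * Real.sqrt (Real.log n)) :=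
          mul_le_mul_of_nonneg_right hptle (by positivity)
      _ = (C * (k:ℝ)^k) * ((Real.log n)⁻¹ * Real.sqrt (Real.log n)) := by ring
      _ = (C * (k:ℝ)^k) * Real.log n ^ (-(1/2:ℝ)) := by
          rw [Real.sqrt_eq_rpow, ← Real.rpow_neg_one (Real.log n), ← Real.rpow_add hLpos]
          norm_num
      _ ≤ 1 := le_of_lt hlt
  · -- case w ≥ k + 1
    have hb := pattern_balance hbal hT (by omega)
    rw [← hvdef, ← hhdef, ← hwdef, ← hh'def] at hb
    have hh1 : (1:ℝ) ≤ (h:ℝ) - 1 := by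
      have : (2:ℝ) ≤ (h:ℝ) := by exact_mod_cast hh2
      linarith
    have hk1 : 1 ≤ k := hk
    have hacast : ((h - h' : ℕ):ℝ) = (h:ℝ) - (h':ℝ) := by
      push_cast [Nat.cast_sub (le_of_lt hh'h)]
      ring
    set c : ℝ := ((h - h' : ℕ):ℝ)/((h:ℝ)-1) with hcdef
    clear_value c
    have hcpos : 0 < c := by
      rw [hcdef, hacast]
      have : (h':ℝ) + 1 ≤ (h:ℝ) := by exact_mod_cast hh'h
      apply div_pos <;> linarith
    set breal : ℝ := ((v:ℝ)-(k:ℝ)) * c - ((v:ℝ)-(w:ℝ)) with hbdef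
    clear_value breal
    have hkw' : (k:ℝ) + 1 ≤ (w:ℝ) := by exact_mod_cast hwk
    have hkv' : (k:ℝ) + 1 ≤ (v:ℝ) := by exact_mod_cast hv
    have hwv' : (w:ℝ) ≤ (v:ℝ) := by exact_mod_cast hwv
    have hbpos : 0 < breal := by
      rw [hbdef, hcdef, hacast, sub_pos, mul_div_assoc', lt_div_iff₀ (by linarith : (0:ℝ) < (h:ℝ)-1)]
      nlinarith [hb]
    set Cst : ℝ := C * (k:ℝ)^k * (3*(k:ℝ)*(h:ℝ))^(w-k) with hCst
    clear_value Cst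
    have htend : Tendsto (fun n : ℕ =>
        Cst * (Real.log n ^ ((v:ℝ)+1) * (n:ℝ)^(-breal))) atTop (nhds 0) := by
      simpa using (tendsto_logpow_rpow_neg ((v:ℝ)+1) hbpos).const_mul Cst
    filter_upwards [eventually_ge_atTop 3,
      htend.eventually_lt_const (by norm_num : (0:ℝ) < 1)] with n hn3 hlt
    obtain ⟨hp0, hp1, hpow, hpowa⟩ := pval_facts hv hh2 hc₂ hn3
    have hL : 1 ≤ Real.log n := one_le_log_of_three_le hn3
    have hLpos : (0:ℝ) < Real.log n := by linarith
    have hn1 : (1:ℝ) ≤ (n:ℝ) := by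
      have : (3:ℝ) ≤ (n:ℝ) := by exact_mod_cast hn3
      linarith
    have hnpos : (0:ℝ) < (n:ℝ) := by linarith
    set X : ℝ := (n:ℝ) ^ ((v:ℝ)-(k:ℝ)) * Real.log n with hXdef
    clear_value X
    have hnrpos : (0:ℝ) < (n:ℝ) ^ ((v:ℝ)-(k:ℝ)) := Real.rpow_pos_of_pos hnpos _
    have hXpos : 0 < X := by
      rw [hXdef]; positivity
    have hMle : (k:ℝ)*((h:ℝ)*(⌈Real.log n⌉₊:ℝ))+(k:ℝ) ≤ 3*(k:ℝ)*(h:ℝ)*Real.log n := by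
      have hceil : (⌈Real.log n⌉₊:ℝ) ≤ Real.log n + 1 :=
        le_of_lt (Nat.ceil_lt_add_one (by linarith))
      have hk' : (1:ℝ) ≤ (k:ℝ) := by exact_mod_cast hk1
      have hh' : (2:ℝ) ≤ (h:ℝ) := by exact_mod_cast hh2
      have e1 : (k:ℝ)*(h:ℝ)*1 ≤ (k:ℝ)*(h:ℝ)*Real.log n :=
        mul_le_mul_of_nonneg_left hL (by positivity)
      have e0 : (1:ℝ) ≤ (h:ℝ)*Real.log n := by nlinarith [hh', hL]
      have e2 : (k:ℝ)*1 ≤ (k:ℝ)*((h:ℝ)*Real.log n) :=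
        mul_le_mul_of_nonneg_left e0 (by positivity)
      have e3 : (k:ℝ)*((h:ℝ)*(⌈Real.log n⌉₊:ℝ)) ≤ (k:ℝ)*((h:ℝ)*(Real.log n + 1)) := by
        gcongr
      nlinarith [e1, e2, e3]
    have hXge : (n:ℝ)^((v:ℝ)-(k:ℝ)) ≤ X := by
      rw [hXdef]
      exact le_mul_of_one_le_right hnrpos.le hL
    have hstep2 : X^(-c) ≤ ((n:ℝ)^((v:ℝ)-(k:ℝ)))^(-c) := by
      rw [Real.rpow_neg hXpos.le, Real.rpow_neg hnrpos.le]
      exact inv_anti₀ (Real.rpow_pos_of_pos hnrpos c)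
        (Real.rpow_le_rpow hnrpos.le hXge hcpos.le)
    have hpowa' : pval c₂ k v h n ^ (h - h') ≤ X ^ (-c) := by
      have := hpowa (h - h')
      rw [hcdef, ← neg_div]
      exact this
    have hnn : (n:ℝ)^(v-w) * ((n:ℝ)^((v:ℝ)-(k:ℝ)))^(-c) = (n:ℝ)^(-breal) := by
      rw [← Real.rpow_natCast (n:ℝ) (v-w), ← Real.rpow_mul hnpos.le,
        ← Real.rpow_add hnpos, Nat.cast_sub hwv]
      congr 1
      rw [hbdef]
      ring
    have hpt : patTerm F n (k*(h * ⌈Real.log n⌉₊)+k) (pval c₂ k v h n) T ≤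
        (k:ℝ)^k * (3*(k:ℝ)*(h:ℝ)*Real.log n)^(w-k) * (n:ℝ)^(-breal) := by
      rw [patTerm]
      push_cast
      rw [← hvdef, ← hhdef, ← hwdef, ← hh'def]
      have s1 : ((k:ℝ)*((h:ℝ)*(⌈Real.log n⌉₊:ℝ))+(k:ℝ))^(w-k) ≤
          (3*(k:ℝ)*(h:ℝ)*Real.log n)^(w-k) :=
        pow_le_pow_left₀ (by positivity) hMle _
      have s2 : (k:ℝ)^k * ((k:ℝ)*((h:ℝ)*(⌈Real.log n⌉₊:ℝ))+(k:ℝ))^(w-k) * (n:ℝ)^(v-w) ≤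
          (k:ℝ)^k * (3*(k:ℝ)*(h:ℝ)*Real.log n)^(w-k) * (n:ℝ)^(v-w) :=
        mul_le_mul_of_nonneg_right
          (mul_le_mul_of_nonneg_left s1 (by positivity)) (by positivity)
      calc (k:ℝ)^k * ((k:ℝ)*((h:ℝ)*(⌈Real.log n⌉₊:ℝ))+(k:ℝ))^(w-k) * (n:ℝ)^(v-w) *
            pval c₂ k v h n ^ (h - h')
          ≤ ((k:ℝ)^k * (3*(k:ℝ)*(h:ℝ)*Real.log n)^(w-k) * (n:ℝ)^(v-w)) * (X^(-c)) :=
            mul_le_mul s2 hpowa' (pow_nonneg hp0.le _) (by positivity)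
        _ ≤ ((k:ℝ)^k * (3*(k:ℝ)*(h:ℝ)*Real.log n)^(w-k) * (n:ℝ)^(v-w)) *
              (((n:ℝ)^((v:ℝ)-(k:ℝ)))^(-c)) :=
            mul_le_mul_of_nonneg_left hstep2 (by positivity)
        _ = (k:ℝ)^k * (3*(k:ℝ)*(h:ℝ)*Real.log n)^(w-k) * (n:ℝ)^(-breal) := by
            rw [mul_assoc, hnn]
    calc patTerm F n (k*(h * ⌈Real.log n⌉₊)+k) (pval c₂ k v h n) T *
          (C * Real.sqrt (Real.log n))
        ≤ ((k:ℝ)^k * (3*(k:ℝ)*(h:ℝ)*Real.log n)^(w-k) * (n:ℝ)^(-breal)) *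
            (C * Real.sqrt (Real.log n)) := by
          apply mul_le_mul_of_nonneg_right hpt (by positivity)
      _ = Cst * ((Real.log n ^ (w-k) * Real.sqrt (Real.log n)) * (n:ℝ)^(-breal)) := by
          rw [hCst, mul_pow, mul_pow]
          ring
      _ ≤ Cst * (Real.log n ^ ((v:ℝ)+1) * (n:ℝ)^(-breal)) := by
          have hfac : Real.log n ^ (w-k) * Real.sqrt (Real.log n) ≤
              Real.log n ^ ((v:ℝ)+1) := by
            rw [Real.sqrt_eq_rpow, ← Real.rpow_natCast (Real.log n) (w-k),
              ← Real.rpow_add hLpos]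
            apply Real.rpow_le_rpow_of_exponent_le hL
            have : ((w-k : ℕ):ℝ) ≤ (v:ℝ) := by
              have : (w - k : ℕ) ≤ v := by omega
              exact_mod_cast this
            linarith
          apply mul_le_mul_of_nonneg_left _ (by rw [hCst]; positivity)
          apply mul_le_mul_of_nonneg_right hfac (by positivity)
      _ ≤ 1 := le_of_lt hlt

end PatternBounds


section Final

open Finset Filter Real

variable {k : ℕ}

lemma q_eventually (F : UnifHypergraph k) (hk : 1 ≤ k) (hbal : F.StrictlyBalanced)
    (hh2 : 2 ≤ F.edges.card) {c₂ : ℝ} (hc₂ : 1 ≤ c₂) :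
    ∀ᶠ n : ℕ in atTop,
      (∑ T ∈ patterns F, patTerm F n (k*(F.edges.card * ⌈Real.log n⌉₊)+k)
        (pval c₂ k F.verts.card F.edges.card n) T) ≤ 1 / Real.sqrt (Real.log n) := by
  set N := (patterns F).card with hN
  rcases Nat.eq_zero_or_pos N with h0 | hpos
  · have hemp : patterns F = ∅ := Finset.card_eq_zero.mp h0
    filter_upwards [eventually_ge_atTop 3] with n hn3
    rw [hemp, Finset.sum_empty]
    positivity
  · have hCpos : (0:ℝ) < (N:ℝ) := by exact_mod_cast hpos
    have hev : ∀ᶠ n : ℕ in atTop, ∀ T ∈ patterns F,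
        patTerm F n (k*(F.edges.card * ⌈Real.log n⌉₊)+k)
          (pval c₂ k F.verts.card F.edges.card n) T * ((N:ℝ) * Real.sqrt (Real.log n)) ≤ 1 := by
      rw [Filter.eventually_all_finset]
      intro T hT
      exact patTerm_eventually F hk hbal hh2 hc₂ hCpos hT
    filter_upwards [hev, eventually_ge_atTop 3] with n hn hn3
    have hL : 1 ≤ Real.log n := one_le_log_of_three_le hn3
    have hsq : 0 < Real.sqrt (Real.log n) := Real.sqrt_pos.mpr (by linarith)
    have hNs : (0:ℝ) < (N:ℝ) * Real.sqrt (Real.log n) := by positivity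
    have per : ∀ T ∈ patterns F,
        patTerm F n (k*(F.edges.card * ⌈Real.log n⌉₊)+k)
          (pval c₂ k F.verts.card F.edges.card n) T ≤
        1 / ((N:ℝ) * Real.sqrt (Real.log n)) := by
      intro T hT
      rw [le_div_iff₀ hNs]
      exact hn T hT
    calc ∑ T ∈ patterns F, patTerm F n (k*(F.edges.card * ⌈Real.log n⌉₊)+k)
          (pval c₂ k F.verts.card F.edges.card n) T
        ≤ ∑ _T ∈ patterns F, 1 / ((N:ℝ) * Real.sqrt (Real.log n)) :=
          Finset.sum_le_sum per
      _ = (N:ℝ) * (1 / ((N:ℝ) * Real.sqrt (Real.log n))) := by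
          rw [Finset.sum_const, ← hN, nsmul_eq_mul]
      _ = 1 / Real.sqrt (Real.log n) := by
          field_simp

lemma final_exp_bound (hk : 1 ≤ k) :
    ∀ᶠ n : ℕ in atTop,
      (1 / Real.sqrt (Real.log n)) ^ (⌈Real.log n⌉₊) ≤ (n:ℝ) ^ (-2 * (k:ℝ)) := by
  have hloglog : Tendsto (fun n : ℕ => Real.log (Real.log n)) atTop atTop :=
    Real.tendsto_log_atTop.comp (Real.tendsto_log_atTop.comp tendsto_natCast_atTop_atTop)
  filter_upwards [eventually_ge_atTop 3,
    hloglog.eventually_ge_atTop (8*(k:ℝ))] with n hn3 hll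
  have hL : 1 ≤ Real.log n := one_le_log_of_three_le hn3
  have hLpos : (0:ℝ) < Real.log n := by linarith
  have hnpos : (0:ℝ) < (n:ℝ) := by positivity
  set L := Real.log n with hLdef
  set r₀ := ⌈L⌉₊ with hr₀
  have hr₀L : L ≤ (r₀:ℝ) := Nat.le_ceil L
  have h1 : (1:ℝ) / Real.sqrt L = L ^ (-(1/2:ℝ)) := by
    rw [Real.sqrt_eq_rpow, Real.rpow_neg hLpos.le, one_div]
  rw [h1, ← Real.rpow_natCast (L ^ (-(1/2:ℝ))) r₀, ← Real.rpow_mul hLpos.le]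
  rw [Real.rpow_def_of_pos hLpos, Real.rpow_def_of_pos hnpos]
  apply Real.exp_le_exp.mpr
  have hlogL : (0:ℝ) ≤ Real.log L := Real.log_nonneg hL
  have hr₀0 : (0:ℝ) ≤ (r₀:ℝ) := Nat.cast_nonneg _
  have hmul : L * (8*(k:ℝ)) ≤ (r₀:ℝ) * Real.log L :=
    mul_le_mul hr₀L hll (by positivity) hr₀0
  have hkL : (0:ℝ) ≤ (k:ℝ) * L := by positivity
  nlinarith [hmul, hkL]

end Final

/-- The expected number of `(⌈log n⌉,f)`-clusters in `H_{n,p}`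
is at most `n^{-2k}`. -/
theorem stmt_13 (k : ℕ) (hk : 2 ≤ k) (F : UnifHypergraph k)
    (hbal : F.StrictlyBalanced)
    (hcount : F.verts.card + 1 ≤ F.edges.card + k)
    (hdeg : 2 ≤ F.maxDeg (k - 1)) :
    ∃ C₂ : ℝ, 0 < C₂ ∧ ∀ c₂ : ℝ, C₂ ≤ c₂ →
      ∀ᶠ n : ℕ in atTop, ∀ f ∈ kSets n k,
        (∫ ω, (clusterCount F (Hnp n k (pval c₂ k F.verts.card F.edges.card n) ω) f
            ⌈Real.log n⌉₊ : ℝ) ∂ birthμ n) ≤ (n : ℝ) ^ (-2 * (k : ℝ)) := by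
  refine ⟨1, one_pos, fun c₂ hc₂ => ?_⟩
  have hv : k + 1 ≤ F.verts.card := hbal.1
  have hh2 : 2 ≤ F.edges.card := by omega
  have hk1 : 1 ≤ k := by omega
  filter_upwards [eventually_ge_atTop 3, q_eventually F hk1 hbal hh2 hc₂,
    final_exp_bound hk1] with n hn3 hq hfin
  intro f hf
  have hfk : f.card = k := (Finset.mem_powersetCard.mp hf).2
  have hn0 : 0 < n := by omega
  obtain ⟨hp0, hp1, -, -⟩ := pval_facts hv hh2 hc₂ hn3
  have hL : 1 ≤ Real.log n := one_le_log_of_three_le hn3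
  have hr₀1 : 1 ≤ ⌈Real.log n⌉₊ := by
    rw [Nat.one_le_ceil_iff]
    linarith
  have hsq : 0 < Real.sqrt (Real.log n) := Real.sqrt_pos.mpr (by linarith)
  rw [integral_clusterCount F n (⌈Real.log n⌉₊) hp0.le hp1 f]
  have hstep : ∀ D : Finset (Finset (Fin n)), f ∈ D →
      (D.sup id).card ≤ k*(F.edges.card*⌈Real.log n⌉₊)+k →
      ∑ A ∈ (Finset.univ.filter fun A : Finset (Finset (Fin n)) =>
        ExtOK F f D A), (pval c₂ k F.verts.card F.edges.card n) ^ (A \ D).card ≤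
      1 / Real.sqrt (Real.log n) :=
    fun D hfD hM => le_trans (step_sum_le F hn0 hp0.le hp1 hfk hfD hM) hq
  have htot := total_le F hn0 hp0.le hp1 (by positivity) hh2 hfk (⌈Real.log n⌉₊)
    (le_refl _) hstep (⌈Real.log n⌉₊) hr₀1 (le_refl _)
  refine le_trans htot ?_
  calc pval c₂ k F.verts.card F.edges.card n * (1 / Real.sqrt (Real.log n)) ^ ⌈Real.log n⌉₊
      ≤ 1 * (1 / Real.sqrt (Real.log n)) ^ ⌈Real.log n⌉₊ :=
        mul_le_mul_of_nonneg_right hp1 (by positivity)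
    _ = (1 / Real.sqrt (Real.log n)) ^ ⌈Real.log n⌉₊ := one_mul _
    _ ≤ (n:ℝ) ^ (-2 * (k:ℝ)) := hfin
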